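/- For any real α ≥ 2 and integers 1 ≤ j' ≤ k with j = j' - 1, and any x ≥ jα, ∏_{i=j'}^k σ(x - iα) ≥ (1/5)·exp(-(α/2)·(k-j+1)(k-j)), where σ is the logistic sigmoid. -/

import Mathlib

open Real Finset

private lemma sigma_mono' {a t : ℝ} (h : a ≤ t) :
    Real.exp a / (1 + Real.exp a) ≤ Real.exp t / (1 + Real.exp t) := by
  have h1 : (0:ℝ) < 1 + Real.exp a := by positivity
  have h2 : (0:ℝ) < 1 + Real.exp t := by positivity
  rw [div_le_div_iff₀ h1 h2]
  have := Real.exp_le_exp.2 h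
  nlinarith [Real.exp_pos a, Real.exp_pos t]

private lemma factor_lb (α t : ℝ) (m : ℕ) (hα : 2 ≤ α) (ht : -(((m:ℝ)+1) * α) ≤ t) :
    Real.exp (-(((m:ℝ)+1) * α)) * Real.exp (-(1/2:ℝ)^(m+1))
      ≤ Real.exp t / (1 + Real.exp t) := by
  refine le_trans ?_ (sigma_mono' ht)
  set a := -(((m:ℝ)+1) * α) with ha
  have h1 : Real.exp a ≤ (1/2:ℝ)^(m+1) := by
    have e1 : Real.exp a ≤ Real.exp (-(2*((m:ℝ)+1))) := by
      apply Real.exp_le_exp.2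
      rw [ha]
      have : (0:ℝ) ≤ (m:ℝ)+1 := by positivity
      nlinarith
    have e2 : Real.exp (-(2*((m:ℝ)+1))) = (Real.exp (-2))^(m+1) := by
      rw [← Real.exp_nat_mul]
      push_cast; ring_nf
    have e3 : Real.exp (-2:ℝ) ≤ (1/2:ℝ) := by
      have hmul : Real.exp (-2) * Real.exp 2 = 1 := by rw [← Real.exp_add]; norm_num
      nlinarith [Real.add_one_le_exp (2:ℝ), Real.exp_pos (-2:ℝ)]
    calc Real.exp a ≤ (Real.exp (-2))^(m+1) := by rw [← e2]; exact e1
      _ ≤ (1/2:ℝ)^(m+1) := pow_le_pow_left₀ (Real.exp_pos _).le e3 _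
  have h3 : Real.exp (-(1/2:ℝ)^(m+1)) ≤ 1/(1+Real.exp a) := by
    have hle : 1 + Real.exp a ≤ Real.exp ((1/2:ℝ)^(m+1)) := by
      calc 1 + Real.exp a ≤ Real.exp (Real.exp a) := by
            have := Real.add_one_le_exp (Real.exp a); linarith
        _ ≤ Real.exp ((1/2:ℝ)^(m+1)) := Real.exp_le_exp.2 h1
    rw [Real.exp_neg, ← one_div]
    apply one_div_le_one_div_of_le (by positivity) hle
  calc Real.exp a * Real.exp (-(1/2:ℝ)^(m+1))
      ≤ Real.exp a * (1/(1+Real.exp a)) :=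
        mul_le_mul_of_nonneg_left h3 (Real.exp_pos a).le
    _ = Real.exp a / (1 + Real.exp a) := by ring

private lemma gauss_sum (n : ℕ) :
    ∑ m ∈ Finset.range (n+1), ((m:ℝ)+1) = ((n:ℝ)+1) * ((n:ℝ)+2) / 2 := by
  induction n with
  | zero => norm_num
  | succ p ih => rw [Finset.sum_range_succ, ih]; push_cast; ring

private lemma geom_sum' (n : ℕ) :
    ∑ m ∈ Finset.range (n+1), (1/2:ℝ)^(m+1) = 1 - (1/2:ℝ)^(n+1) := by
  induction n with
  | zero => norm_num
  | succ p ih => rw [Finset.sum_range_succ, ih]; ring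

theorem stmt_10 (x α : ℝ) (k j' : ℕ) (hα : 2 ≤ α) (hj'1 : 1 ≤ j') (hj' : j' ≤ k)
    (hx : ((j' : ℝ) - 1) * α ≤ x) :
    (1 / 5) * Real.exp (-(α / 2) * (((k : ℝ) - ((j' : ℝ) - 1)) + 1) * ((k : ℝ) - ((j' : ℝ) - 1)))
      ≤ ∏ i ∈ Finset.Icc j' k, Real.exp (x - i * α) / (1 + Real.exp (x - i * α)) := by
  obtain ⟨n, rfl⟩ : ∃ n, k = j' + n := ⟨k - j', by omega⟩
  have hkj : ((j' + n : ℕ) : ℝ) - ((j' : ℝ) - 1) = (n : ℝ) + 1 := by push_cast; ring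
  rw [hkj, ← Finset.Ico_add_one_right_eq_Icc, Finset.prod_Ico_eq_prod_range]
  have hcard : j' + n + 1 - j' = n + 1 := by omega
  rw [hcard]
  have key : ∀ m ∈ Finset.range (n+1),
      Real.exp (-(((m:ℝ)+1) * α)) * Real.exp (-(1/2:ℝ)^(m+1))
        ≤ Real.exp (x - (↑(j' + m)) * α) / (1 + Real.exp (x - (↑(j' + m)) * α)) := by
    intro m _
    apply factor_lb α _ m hα
    push_cast
    nlinarith [hx, hα]
  have hpos : ∀ m ∈ Finset.range (n+1),
      0 ≤ Real.exp (-(((m:ℝ)+1) * α)) * Real.exp (-(1/2:ℝ)^(m+1)) := by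
    intro m _; positivity
  refine le_trans ?_ (Finset.prod_le_prod hpos key)
  rw [Finset.prod_mul_distrib, ← Real.exp_sum, ← Real.exp_sum]
  have hsum1 : ∑ m ∈ Finset.range (n+1), -(((m:ℝ)+1) * α)
      = -(α/2) * (((n:ℝ)+1) + 1) * ((n:ℝ)+1) := by
    have hg := gauss_sum n
    calc ∑ m ∈ Finset.range (n+1), -(((m:ℝ)+1) * α)
        = (∑ m ∈ Finset.range (n+1), ((m:ℝ)+1)) * (-α) := by
          rw [Finset.sum_mul]; exact Finset.sum_congr rfl (fun m _ => by ring)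
      _ = -(α/2) * (((n:ℝ)+1) + 1) * ((n:ℝ)+1) := by rw [hg]; ring
  rw [hsum1]
  have hgeom : -1 ≤ ∑ m ∈ Finset.range (n+1), -((1/2:ℝ)^(m+1)) := by
    have hg := geom_sum' n
    rw [Finset.sum_neg_distrib, hg]
    have : (0:ℝ) ≤ (1/2:ℝ)^(n+1) := by positivity
    linarith
  have h5 : (1/5:ℝ) ≤ Real.exp (∑ m ∈ Finset.range (n+1), -((1/2:ℝ)^(m+1))) := by
    calc (1/5:ℝ) ≤ Real.exp (-1) := by
          have hmul : Real.exp (-1) * Real.exp 1 = 1 := by rw [← Real.exp_add]; norm_num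
          nlinarith [Real.exp_one_lt_d9, Real.exp_pos (-1:ℝ), Real.exp_pos (1:ℝ)]
      _ ≤ _ := Real.exp_le_exp.2 hgeom
  calc (1/5) * Real.exp (-(α/2) * (((n:ℝ)+1) + 1) * ((n:ℝ)+1))
      ≤ Real.exp (∑ m ∈ Finset.range (n+1), -((1/2:ℝ)^(m+1)))
        * Real.exp (-(α/2) * (((n:ℝ)+1) + 1) * ((n:ℝ)+1)) :=
        mul_le_mul_of_nonneg_right h5 (Real.exp_pos _).le
    _ = Real.exp (-(α/2) * (((n:ℝ)+1) + 1) * ((n:ℝ)+1))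
        * Real.exp (∑ m ∈ Finset.range (n+1), -((1/2:ℝ)^(m+1))) := by ring
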